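/- For all integers m ≥ n ≥ 1, there exist integers 0 ≤ m_1 < m_2 < … < m_n ≤ m and nonnegative real numbers α_1, α_2, …, α_n such that H_n(x; R_{m,n}) = Σ_{i=1}^{n} α_i (x − m_i)^n for all real x; that is, at R = R_{m,n} the polynomial H_n(·; R_{m,n}) admits such a representation with at most n summands. -/

import Mathlib

open Polynomial
open Finset

noncomputable section

/-- A polynomial is absolutely monotonic on `[a, b]` if all of its derivatives
(including the 0th) are nonnegative at every point of `[a, b]`. -/
def AbsolutelyMonotonicOn (φ : Polynomial ℝ) (a b : ℝ) : Prop :=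
  ∀ (k : ℕ), ∀ x ∈ Set.Icc a b, 0 ≤ (Polynomial.derivative^[k] φ).eval x

/-- The set `Π_{m,n}` of real polynomials of degree at most `m` with
`φ^{(k)}(0) = 1` for `k = 0, 1, …, n`. -/
def PiSet (m n : ℕ) : Set (Polynomial ℝ) :=
  {φ : Polynomial ℝ | φ.natDegree ≤ m ∧ ∀ k ≤ n, (Polynomial.derivative^[k] φ).eval 0 = 1}

/-- The threshold factor `R(φ)`. -/
def thresholdFactor (φ : Polynomial ℝ) : ℝ :=
  sSup {r : ℝ | r = 0 ∨ (0 < r ∧ AbsolutelyMonotonicOn φ (-r) 0)}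

/-- The optimal threshold factor `R_{m,n}`. -/
def Ropt (m n : ℕ) : ℝ :=
  sSup (thresholdFactor '' PiSet m n)

/-- The Touchard polynomials `B_n`. -/
def touchard : ℕ → Polynomial ℝ
  | 0 => 1
  | (n + 1) => Polynomial.X * (touchard n + Polynomial.derivative (touchard n))

/-- The polynomial `H_n(·; R) = Σ_{k=0}^{n} (−1)^{n−k} binom(n,k) B_{n−k}(R) x^k`. -/
def Hpoly (n : ℕ) (R : ℝ) : Polynomial ℝ :=
  ∑ k ∈ Finset.range (n + 1),
    Polynomial.C ((-1 : ℝ) ^ (n - k) * (n.choose k : ℝ) * (touchard (n - k)).eval R) *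
      Polynomial.X ^ k

/-- Stirling numbers of the second kind. -/
def St : ℕ → ℕ → ℕ
  | 0, 0 => 1
  | 0, _ + 1 => 0
  | _ + 1, 0 => 0
  | s + 1, k + 1 => (k + 1) * St s (k + 1) + St s k

lemma St_self (s : ℕ) : St s s = 1 := by
  induction s with
  | zero => rfl
  | succ s ih => simp [St, ih, St_gt]
where
  St_gt : ∀ s k, s < k → St s k = 0 := by
    intro s
    induction s with
    | zero => intro k hk; cases k with | zero => omega | succ k => rfl
    | succ s ih =>
      intro k hk
      cases k with
      | zero => omega
      | succ k => simp [St, ih k (by omega), ih (k+1) (by omega)]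

lemma St_gt_eq_zero {s k : ℕ} (h : s < k) : St s k = 0 := by
  induction s generalizing k with
  | zero => cases k with | zero => omega | succ k => rfl
  | succ s ih =>
    cases k with
    | zero => omega
    | succ k => simp [St, ih (by omega : s < k), ih (by omega : s < k + 1)]

lemma desc_mul (j k : ℕ) :
    j * j.descFactorial k = j.descFactorial (k + 1) + k * j.descFactorial k := by
  rcases le_or_gt (k + 1) j with h | h
  · rw [Nat.descFactorial_succ]
    have : k ≤ j := by omega
    have : j - k + k = j := by omega
    nlinarith [Nat.descFactorial_succ j k]
  · rcases le_or_gt k j with h2 | h2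
    · have hj : j = k := by omega
      subst hj
      simp [Nat.descFactorial_succ]
    · rw [Nat.descFactorial_eq_zero_iff_lt.2 h2,
        Nat.descFactorial_eq_zero_iff_lt.2 (by omega)]
      simp

lemma pow_eq_sum_St (s j : ℕ) :
    j ^ s = ∑ k ∈ range (s + 1), St s k * j.descFactorial k := by
  induction s with
  | zero => simp [St]
  | succ s ih =>
    have : j ^ (s + 1) = ∑ k ∈ range (s + 1), St s k * (j * j.descFactorial k) := by
      rw [pow_succ, ih, Finset.sum_mul]
      exact Finset.sum_congr rfl fun k _ => by ring
    rw [this]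
    simp_rw [desc_mul]
    rw [Finset.sum_range_succ' (fun k => St (s+1) k * j.descFactorial k)]
    simp only [St, Nat.descFactorial_zero]
    have h1 : ∑ k ∈ range (s + 1), St s k * (j.descFactorial (k+1) + k * j.descFactorial k)
        = (∑ k ∈ range (s + 1), St s k * j.descFactorial (k+1))
          + ∑ k ∈ range (s + 1), k * St s k * j.descFactorial k := by
      rw [← Finset.sum_add_distrib]; congr 1; ext k; ring
    rw [h1]
    have h2 : ∑ k ∈ range (s + 1), k * St s k * j.descFactorial k
        = ∑ k ∈ range (s + 1), (k+1) * St s (k+1) * j.descFactorial (k+1) := by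
      rw [Finset.sum_range_succ' (fun k => k * St s k * j.descFactorial k)]
      rw [Finset.sum_range_succ (fun k => (k+1) * St s (k+1) * j.descFactorial (k+1))]
      simp [St_gt_eq_zero (by omega : s < s + 1)]
    rw [h2, ← Finset.sum_add_distrib]
    exact Finset.sum_congr rfl fun k _ => by simp [St]; ring

lemma touchard_eq (s : ℕ) :
    touchard s = ∑ k ∈ range (s + 1), C (St s k : ℝ) * X ^ k := by
  induction s with
  | zero => simp [touchard, St]
  | succ s ih =>
    rw [touchard, ih]
    rw [derivative_sum]
    simp_rw [derivative_C_mul_X_pow]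
    rw [mul_add, Finset.mul_sum, Finset.mul_sum]
    have hl : ∀ k ∈ range (s+1), X * (C (St s k : ℝ) * X ^ k) = C (St s k : ℝ) * X ^ (k+1) := by
      intro k _; ring
    have hr : ∀ k ∈ range (s+1), X * (C ((St s k : ℝ) * k) * X ^ (k-1))
        = C ((St s k : ℝ) * k) * X ^ k := by
      intro k _
      cases k with
      | zero => simp
      | succ k => rw [Nat.add_sub_cancel]; ring
    rw [Finset.sum_congr rfl hl, Finset.sum_congr rfl hr]
    have h2 : ∑ k ∈ range (s + 1), C ((St s k : ℝ) * k) * X ^ k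
        = ∑ k ∈ range (s + 1), C ((St s (k+1) : ℝ) * (k+1)) * X ^ (k+1) := by
      rw [Finset.sum_range_succ' (fun k => C ((St s k : ℝ) * k) * X ^ k)]
      rw [Finset.sum_range_succ (fun k => C ((St s (k+1) : ℝ) * (k+1)) * X ^ (k+1))]
      simp [St_gt_eq_zero (by omega : s < s + 1)]
    rw [h2]
    rw [Finset.sum_range_succ' (fun k => C (St (s+1) k : ℝ) * X ^ k)]
    have h0 : (C (St (s+1) 0 : ℝ) * X ^ 0 : ℝ[X]) = 0 := by
      simp [St]
    rw [h0, add_zero, ← Finset.sum_add_distrib]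
    refine Finset.sum_congr rfl fun k _ => ?_
    have hst : (St (s+1) (k+1) : ℝ) = ((k:ℝ)+1) * St s (k+1) + St s k := by
      show ((( k + 1) * St s (k + 1) + St s k : ℕ) : ℝ) = _
      push_cast; ring
    rw [hst]
    simp only [C_add, C_mul, map_one, map_natCast]
    ring

lemma touchard_eval (s : ℕ) (r : ℝ) :
    (touchard s).eval r = ∑ k ∈ range (s + 1), (St s k : ℝ) * r ^ k := by
  rw [touchard_eq, eval_finset_sum]
  simp



lemma iter_deriv_eval (ψ : ℝ[X]) {N : ℕ} (hdeg : ψ.natDegree < N) (k : ℕ) (r : ℝ) :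
    (derivative^[k] ψ).eval r
      = ∑ j ∈ range N, ψ.coeff j * (j.descFactorial k : ℝ) * r ^ (j - k) := by
  conv_lhs => rw [ψ.as_sum_range' N hdeg]
  rw [iterate_derivative_sum, eval_finset_sum]
  refine Finset.sum_congr rfl fun j _ => ?_
  rw [← smul_X_eq_monomial, iterate_derivative_smul, iterate_derivative_X_pow_eq_C_mul]
  simp [mul_assoc]

lemma iter_deriv_eval_pos (ψ : ℝ[X]) {N : ℕ} (hdeg : ψ.natDegree < N) (k : ℕ) {r : ℝ}
    (hr : 0 < r) :
    r ^ k * (derivative^[k] ψ).eval r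
      = ∑ j ∈ range N, (ψ.coeff j * r ^ j) * (j.descFactorial k : ℝ) := by
  rw [iter_deriv_eval ψ hdeg k r, Finset.mul_sum]
  refine Finset.sum_congr rfl fun j _ => ?_
  rcases le_or_gt k j with h | h
  · have : r ^ k * r ^ (j - k) = r ^ j := by
      rw [← pow_add]; congr 1; omega
    calc r ^ k * (ψ.coeff j * ↑(j.descFactorial k) * r ^ (j - k))
        = ψ.coeff j * (r ^ k * r ^ (j-k)) * ↑(j.descFactorial k) := by ring
      _ = ψ.coeff j * r ^ j * ↑(j.descFactorial k) := by rw [this]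
  · rw [Nat.descFactorial_eq_zero_iff_lt.2 h]
    simp

lemma eval_nonneg_of_coeff_nonneg (ψ : ℝ[X]) (hc : ∀ j, 0 ≤ ψ.coeff j) {r : ℝ} (hr : 0 ≤ r) :
    0 ≤ ψ.eval r := by
  rw [eval_eq_sum_range]
  exact Finset.sum_nonneg fun j _ => mul_nonneg (hc j) (pow_nonneg hr j)

lemma iter_deriv_coeff_nonneg (ψ : ℝ[X]) (hc : ∀ j, 0 ≤ ψ.coeff j) (k j : ℕ) :
    0 ≤ (derivative^[k] ψ).coeff j := by
  rw [coeff_iterate_derivative]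
  exact nsmul_nonneg (hc _) _

lemma iter_deriv_comp_X_add_C (ψ : ℝ[X]) (r : ℝ) (k : ℕ) :
    derivative^[k] (ψ.comp (X + C r)) = (derivative^[k] ψ).comp (X + C r) := by
  induction k with
  | zero => rfl
  | succ k ih =>
    rw [Function.iterate_succ_apply', ih, Function.iterate_succ_apply']
    rw [derivative_comp]
    simp


def wvec (m n : ℕ) (j : Fin (m + 1)) : Fin (n + 1) → ℝ := fun s => ((j : ℕ) : ℝ) ^ (s : ℕ)

def Fmap (m n : ℕ) (d : Fin (m + 1) → ℝ) : Fin (n + 1) → ℝ := ∑ j, d j • wvec m n j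

def Cset (m n : ℕ) : Set (Fin (n + 1) → ℝ) := Fmap m n '' stdSimplex ℝ (Fin (m + 1))

def muv (n : ℕ) (r : ℝ) : Fin (n + 1) → ℝ := fun s => (touchard (s : ℕ)).eval r

lemma moment_of_falling {m n : ℕ} {d : Fin (m + 1) → ℝ} {r : ℝ}
    (h : ∀ k ≤ n, ∑ j, d j * ((j : ℕ).descFactorial k : ℝ) = r ^ k) :
    ∀ s ≤ n, ∑ j, d j * ((j : ℕ) : ℝ) ^ s = (touchard s).eval r := by
  intro s hs
  have hcast : ∀ j : Fin (m + 1), ((j : ℕ) : ℝ) ^ s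
      = ∑ k ∈ Finset.range (s + 1), (St s k : ℝ) * ((j : ℕ).descFactorial k : ℝ) := by
    intro j
    rw [← Nat.cast_pow, pow_eq_sum_St]
    push_cast
    rfl
  calc ∑ j, d j * ((j : ℕ) : ℝ) ^ s
      = ∑ j, ∑ k ∈ Finset.range (s + 1),
          (St s k : ℝ) * (d j * ((j : ℕ).descFactorial k : ℝ)) := by
        refine Finset.sum_congr rfl fun j _ => ?_
        rw [hcast j, Finset.mul_sum]
        exact Finset.sum_congr rfl fun k _ => by ring
    _ = ∑ k ∈ Finset.range (s + 1), (St s k : ℝ)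
          * ∑ j, d j * ((j : ℕ).descFactorial k : ℝ) := by
        rw [Finset.sum_comm]
        exact Finset.sum_congr rfl fun k _ => by rw [Finset.mul_sum]
    _ = ∑ k ∈ Finset.range (s + 1), (St s k : ℝ) * r ^ k := by
        refine Finset.sum_congr rfl fun k hk => ?_
        have hkn : k ≤ n := le_trans (Nat.lt_succ_iff.1 (Finset.mem_range.1 hk)) hs
        rw [h k hkn]
    _ = (touchard s).eval r := (touchard_eval s r).symm

lemma falling_of_moment {m n : ℕ} {d : Fin (m + 1) → ℝ} {r : ℝ}
    (h : ∀ s ≤ n, ∑ j, d j * ((j : ℕ) : ℝ) ^ s = (touchard s).eval r) :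
    ∀ k ≤ n, ∑ j, d j * ((j : ℕ).descFactorial k : ℝ) = r ^ k := by
  intro k
  induction k using Nat.strong_induction_on with
  | _ k ih =>
    intro hk
    have hcast : ∀ j : Fin (m + 1), ((j : ℕ) : ℝ) ^ k
        = ∑ i ∈ Finset.range (k + 1), (St k i : ℝ) * ((j : ℕ).descFactorial i : ℝ) := by
      intro j
      rw [← Nat.cast_pow, pow_eq_sum_St]
      push_cast
      rfl
    have key : (touchard k).eval r
        = ∑ i ∈ Finset.range (k + 1), (St k i : ℝ)
            * ∑ j, d j * ((j : ℕ).descFactorial i : ℝ) := by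
      rw [← h k hk]
      calc ∑ j, d j * ((j : ℕ) : ℝ) ^ k
          = ∑ j, ∑ i ∈ Finset.range (k + 1),
              (St k i : ℝ) * (d j * ((j : ℕ).descFactorial i : ℝ)) := by
            refine Finset.sum_congr rfl fun j _ => ?_
            rw [hcast j, Finset.mul_sum]
            exact Finset.sum_congr rfl fun i _ => by ring
        _ = _ := by
            rw [Finset.sum_comm]
            exact Finset.sum_congr rfl fun i _ => by rw [Finset.mul_sum]
    rw [Finset.sum_range_succ] at key
    have hik : ∀ i ∈ Finset.range k, (St k i : ℝ) * ∑ j, d j * ((j : ℕ).descFactorial i : ℝ)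
        = (St k i : ℝ) * r ^ i := by
      intro i hi
      rw [ih i (Finset.mem_range.1 hi) (le_trans (le_of_lt (Finset.mem_range.1 hi)) hk)]
    rw [Finset.sum_congr rfl hik, St_self, Nat.cast_one, one_mul] at key
    have ht : (touchard k).eval r = (∑ i ∈ Finset.range k, (St k i : ℝ) * r ^ i) + r ^ k := by
      rw [touchard_eval, Finset.sum_range_succ, St_self, Nat.cast_one, one_mul]
    rw [ht] at key
    linarith

lemma feas_falling {m n : ℕ} {r : ℝ} (hr : 0 < r) {φ : Polynomial ℝ} (hφ : φ ∈ PiSet m n)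
    (hAM : AbsolutelyMonotonicOn φ (-r) 0) :
    ∃ d : Fin (m + 1) → ℝ, (∀ j, 0 ≤ d j) ∧
      ∀ k ≤ n, ∑ j, d j * ((j : ℕ).descFactorial k : ℝ) = r ^ k := by
  obtain ⟨hdeg, hval⟩ := hφ
  set ψ : ℝ[X] := taylor (-r) φ with hψ
  have hψdeg : ψ.natDegree < m + 1 := by
    rw [hψ, natDegree_taylor]; omega
  have hcoeff : ∀ j, 0 ≤ ψ.coeff j := by
    intro j
    rw [hψ, taylor_coeff]
    have hsmul : ((Nat.factorial j : ℕ) : ℝ) * (hasseDeriv j φ).eval (-r)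
        = (derivative^[j] φ).eval (-r) := by
      have h := congrFun (factorial_smul_hasseDeriv (R := ℝ) j) φ
      calc ((Nat.factorial j : ℕ) : ℝ) * (hasseDeriv j φ).eval (-r)
          = ((Nat.factorial j • hasseDeriv (R := ℝ) j) φ).eval (-r) := by
            simp [nsmul_eq_mul]
        _ = (derivative^[j] φ).eval (-r) := by rw [h]
    have hpos : (0 : ℝ) < ((Nat.factorial j : ℕ) : ℝ) := by
      have := Nat.factorial_pos j
      exact_mod_cast this
    have hnn : 0 ≤ (derivative^[j] φ).eval (-r) :=
      hAM j (-r) ⟨le_refl _, by linarith⟩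
    nlinarith [hsmul]
  have hcomp : φ = ψ.comp (X + C r) := by
    rw [hψ, ← taylor_apply, taylor_taylor]
    simp
  have heval : ∀ k, (derivative^[k] ψ).eval r = (derivative^[k] φ).eval 0 := by
    intro k
    conv_rhs => rw [hcomp, iter_deriv_comp_X_add_C]
    rw [eval_comp]
    simp
  refine ⟨fun j => ψ.coeff (j : ℕ) * r ^ (j : ℕ), fun j => mul_nonneg (hcoeff _) (by positivity),
    fun k hk => ?_⟩
  have h1 : r ^ k * (derivative^[k] ψ).eval r
      = ∑ j ∈ Finset.range (m + 1), (ψ.coeff j * r ^ j) * ((j.descFactorial k : ℕ) : ℝ) :=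
    iter_deriv_eval_pos ψ hψdeg k hr
  rw [heval k, hval k hk, mul_one] at h1
  rw [h1]
  exact Fin.sum_univ_eq_sum_range (fun j => ψ.coeff j * r ^ j * ((j.descFactorial k : ℕ) : ℝ)) (m+1)

lemma feas_mem {m n : ℕ} {r : ℝ} (hr : 0 < r) {φ : Polynomial ℝ} (hφ : φ ∈ PiSet m n)
    (hAM : AbsolutelyMonotonicOn φ (-r) 0) : muv n r ∈ Cset m n := by
  obtain ⟨d, hd0, hdf⟩ := feas_falling hr hφ hAM
  have hmom := moment_of_falling hdf
  have hsum1 : ∑ j, d j = 1 := by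
    have h0 := hmom 0 (Nat.zero_le n)
    simpa [touchard] using h0
  refine ⟨d, ⟨hd0, hsum1⟩, ?_⟩
  funext s
  have : Fmap m n d s = ∑ j, d j * ((j : ℕ) : ℝ) ^ (s : ℕ) := by
    rw [Fmap, Finset.sum_apply]
    rfl
  rw [this, hmom (s : ℕ) (Nat.lt_succ_iff.1 s.isLt)]
  rfl

lemma mem_feas {m n : ℕ} {r : ℝ} (hr : 0 < r) (hmem : muv n r ∈ Cset m n) :
    ∃ φ ∈ PiSet m n, AbsolutelyMonotonicOn φ (-r) 0 := by
  obtain ⟨d, ⟨hd0, _⟩, hFd⟩ := hmem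
  have hmom : ∀ s ≤ n, ∑ j, d j * ((j : ℕ) : ℝ) ^ s = (touchard s).eval r := by
    intro s hs
    have := congrFun hFd ⟨s, by omega⟩
    rw [Fmap, Finset.sum_apply] at this
    exact this
  have hfall := falling_of_moment hmom
  set ψ : ℝ[X] := ∑ j : Fin (m + 1), C (d j / r ^ (j : ℕ)) * X ^ (j : ℕ) with hψ
  have hψc : ∀ t : Fin (m + 1), ψ.coeff (t : ℕ) = d t / r ^ (t : ℕ) := by
    intro t
    rw [hψ, finset_sum_coeff]
    rw [Finset.sum_eq_single t]
    · simp
    · intro j _ hjt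
      rw [coeff_C_mul, coeff_X_pow, if_neg (fun h => hjt (Fin.ext h.symm))]
      simp
    · simp
  have hψc0 : ∀ t, 0 ≤ ψ.coeff t := by
    intro t
    rw [hψ, finset_sum_coeff]
    refine Finset.sum_nonneg fun j _ => ?_
    rw [coeff_C_mul, coeff_X_pow]
    have : 0 ≤ d j / r ^ (j : ℕ) := div_nonneg (hd0 j) (by positivity)
    split <;> simp [this]
  have hψdeg : ψ.natDegree ≤ m := by
    rw [hψ]
    refine natDegree_sum_le_of_forall_le _ _ fun j _ => ?_
    exact le_trans (natDegree_C_mul_X_pow_le _ _) (Nat.lt_succ_iff.1 j.isLt)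
  refine ⟨ψ.comp (X + C r), ⟨?_, ?_⟩, ?_⟩
  · rw [← taylor_apply, natDegree_taylor]
    exact hψdeg
  · intro k hk
    rw [iter_deriv_comp_X_add_C, eval_comp]
    simp only [eval_add, eval_X, eval_C, zero_add]
    have h1 : r ^ k * (derivative^[k] ψ).eval r
        = ∑ j ∈ Finset.range (m + 1), (ψ.coeff j * r ^ j) * ((j.descFactorial k : ℕ) : ℝ) :=
      iter_deriv_eval_pos ψ (by omega) k hr
    have h2 : ∑ j ∈ Finset.range (m + 1), (ψ.coeff j * r ^ j) * ((j.descFactorial k : ℕ) : ℝ)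
        = ∑ j, d j * (((j : Fin (m+1)) : ℕ).descFactorial k : ℝ) := by
      rw [← Fin.sum_univ_eq_sum_range (fun j => ψ.coeff j * r ^ j * ((j.descFactorial k : ℕ) : ℝ)) (m+1)]
      refine Finset.sum_congr rfl fun j _ => ?_
      rw [hψc j, div_mul_cancel₀]
      positivity
    rw [h2, hfall k hk] at h1
    have hne : r ^ k ≠ 0 := by positivity
    exact mul_left_cancel₀ hne (h1.trans (mul_one _).symm)
  · intro k x hx
    rw [iter_deriv_comp_X_add_C, eval_comp]
    simp only [eval_add, eval_X, eval_C]
    refine eval_nonneg_of_coeff_nonneg _ (iter_deriv_coeff_nonneg ψ hψc0 k) ?_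
    have := hx.1
    linarith

lemma AM_mono {φ : Polynomial ℝ} {r r' : ℝ} (h : AbsolutelyMonotonicOn φ (-r) 0)
    (hr' : r' ≤ r) : AbsolutelyMonotonicOn φ (-r') 0 := by
  intro k x hx
  exact h k x ⟨by linarith [hx.1], hx.2⟩

lemma tf_nonneg (φ : Polynomial ℝ) : 0 ≤ thresholdFactor φ := by
  apply Real.sSup_nonneg
  rintro x (rfl | ⟨hx, -⟩)
  · exact le_refl 0
  · exact hx.le

lemma Ropt_nonneg (m n : ℕ) : 0 ≤ Ropt m n := by
  apply Real.sSup_nonneg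
  rintro x ⟨φ, -, rfl⟩
  exact tf_nonneg φ

lemma r_le_m {m n : ℕ} (hn : 1 ≤ n) {r : ℝ} (hr : 0 < r) {φ : Polynomial ℝ}
    (hφ : φ ∈ PiSet m n) (hAM : AbsolutelyMonotonicOn φ (-r) 0) : r ≤ m := by
  obtain ⟨d, hd0, hdf⟩ := feas_falling hr hφ hAM
  have h0 := hdf 0 (Nat.zero_le n)
  have h1 := hdf 1 hn
  simp only [Nat.descFactorial_zero, Nat.cast_one, mul_one, pow_zero, pow_one] at h0 h1
  rw [← h1]
  calc ∑ j, d j * ((j : ℕ).descFactorial 1 : ℝ) ≤ ∑ j : Fin (m+1), d j * m := by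
        refine Finset.sum_le_sum fun j _ => ?_
        refine mul_le_mul_of_nonneg_left ?_ (hd0 j)
        rw [Nat.descFactorial_one]
        exact_mod_cast Nat.lt_succ_iff.1 j.isLt
    _ = (∑ j, d j) * m := by rw [Finset.sum_mul]
    _ = m := by rw [h0, one_mul]

lemma tf_le_m {m n : ℕ} (hn : 1 ≤ n) {φ : Polynomial ℝ} (hφ : φ ∈ PiSet m n) :
    thresholdFactor φ ≤ m := by
  apply Real.sSup_le
  · rintro x (rfl | ⟨hx, hAM⟩)
    · positivity
    · exact r_le_m hn hx hφ hAM
  · positivity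

lemma exists_feas_of_lt_Ropt {m n : ℕ} {q : ℝ} (hq : 0 ≤ q) (h : q < Ropt m n) :
    ∃ r : ℝ, q < r ∧ 0 < r ∧ ∃ φ ∈ PiSet m n, AbsolutelyMonotonicOn φ (-r) 0 := by
  by_contra hcon
  push_neg at hcon
  have : Ropt m n ≤ q := by
    apply Real.sSup_le _ hq
    rintro y ⟨φ, hφ, rfl⟩
    apply Real.sSup_le _ hq
    rintro x (rfl | ⟨hx, hAM⟩)
    · exact hq
    · by_contra hxq
      push_neg at hxq
      exact (hcon x hxq hx) φ hφ hAM
  linarith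

lemma Ropt_ge_of_feas {m n : ℕ} (hn : 1 ≤ n) {r : ℝ} (hr : 0 < r)
    (hfeas : ∃ φ ∈ PiSet m n, AbsolutelyMonotonicOn φ (-r) 0) : r ≤ Ropt m n := by
  obtain ⟨φ, hφ, hAM⟩ := hfeas
  have h1 : r ≤ thresholdFactor φ := by
    apply le_csSup
    · refine ⟨m, ?_⟩
      rintro x (rfl | ⟨hx, hAM'⟩)
      · positivity
      · exact r_le_m hn hx hφ hAM'
    · exact Or.inr ⟨hr, hAM⟩
  refine le_trans h1 (le_csSup ⟨m, ?_⟩ ⟨φ, hφ, rfl⟩)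
  rintro y ⟨φ', hφ', rfl⟩
  exact tf_le_m hn hφ'

lemma wvec_zero (m n : ℕ) (j : Fin (m + 1)) : wvec m n j 0 = 1 := by
  simp [wvec]

lemma caratheodory_boundary {m n : ℕ} {v : Fin (n + 1) → ℝ}
    (hv : v ∈ Cset m n)
    (u : ℕ → (Fin (n + 1) → ℝ)) (hu : Filter.Tendsto u Filter.atTop (nhds v))
    (huC : ∀ k, u k ∉ Cset m n) (hu0 : ∀ k, u k 0 = 1) :
    ∃ T : Finset (Fin (m + 1)), T.card ≤ n ∧ ∃ d : Fin (m + 1) → ℝ, (∀ j, 0 ≤ d j) ∧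
      (∀ j ∉ T, d j = 0) ∧ v = ∑ j, d j • wvec m n j := by
  classical
  obtain ⟨d0, hd0s, hFd0⟩ := hv
  suffices H : ∀ N : ℕ, ∀ d : Fin (m + 1) → ℝ, (∀ j, 0 ≤ d j) →
      v = ∑ j, d j • wvec m n j →
      (Finset.univ.filter (fun j => d j ≠ 0)).card ≤ N →
      ∃ T : Finset (Fin (m + 1)), T.card ≤ n ∧ ∃ d : Fin (m + 1) → ℝ, (∀ j, 0 ≤ d j) ∧
        (∀ j ∉ T, d j = 0) ∧ v = ∑ j, d j • wvec m n j by
    exact H (m + 1) d0 hd0s.1 (by rw [← hFd0]; rfl)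
      (le_trans (Finset.card_filter_le _ _) (by simp))
  intro N
  induction N using Nat.strong_induction_on with
  | _ N ih =>
    intro d hd hrep hcard
    set T : Finset (Fin (m + 1)) := Finset.univ.filter (fun j => d j ≠ 0) with hT
    have hdT : ∀ j ∉ T, d j = 0 := by
      intro j hj
      by_contra hne
      exact hj (Finset.mem_filter.2 ⟨Finset.mem_univ j, hne⟩)
    have hTsum : v = ∑ j ∈ T, d j • wvec m n j := by
      rw [hrep]
      exact (Finset.sum_subset (Finset.subset_univ T)
        (fun j _ hj => by rw [hdT j hj, zero_smul])).symm
    rcases le_or_gt T.card n with hc | hc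
    · exact ⟨T, hc, d, hd, hdT, hrep⟩
    by_cases hli : LinearIndependent ℝ (fun i : {x // x ∈ T} => wvec m n i.1)
    · -- independent case: |T| = n+1, basis, contradiction with boundary
      exfalso
      have hfr : Module.finrank ℝ (Fin (n + 1) → ℝ) = n + 1 := Module.finrank_fin_fun ℝ
      have hcard_le : T.card ≤ n + 1 := by
        have h1 := hli.fintype_card_le_finrank
        rwa [Fintype.card_coe, hfr] at h1
      have hcardT : T.card = n + 1 := le_antisymm hcard_le hc
      have hTne : T.Nonempty := Finset.card_pos.1 (by omega)
      haveI : Nonempty {x // x ∈ T} := ⟨⟨hTne.choose, hTne.choose_spec⟩⟩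
      have card_eq : Fintype.card {x // x ∈ T} = Module.finrank ℝ (Fin (n + 1) → ℝ) := by
        rw [Fintype.card_coe, hcardT, hfr]
      set B := basisOfLinearIndependentOfCardEqFinrank hli card_eq with hBdef
      have hB : ⇑B = fun i : {x // x ∈ T} => wvec m n i.1 :=
        coe_basisOfLinearIndependentOfCardEqFinrank hli card_eq
      have hvsum : v = ∑ i : {x // x ∈ T}, d i.1 • B i := by
        rw [hTsum, ← Finset.sum_attach T (fun j => d j • wvec m n j)]
        refine Finset.sum_congr rfl fun i _ => ?_
        rw [hB]
      have hrepr : ∀ i, B.repr v i = d i.1 := by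
        intro i
        have := B.repr_sum_self (fun i => d i.1)
        rw [hvsum]
        rw [this]
      have hdpos : ∀ i : {x // x ∈ T}, 0 < d i.1 := by
        intro i
        have hi : d i.1 ≠ 0 := (Finset.mem_filter.1 i.2).2
        exact lt_of_le_of_ne (hd i.1) (Ne.symm hi)
      have hcont : ∀ i : {x // x ∈ T}, Continuous fun w : Fin (n + 1) → ℝ => B.coord i w :=
        fun i => (B.coord i).continuous_of_finiteDimensional
      have hev : ∀ᶠ k in Filter.atTop, ∀ i : {x // x ∈ T}, 0 < B.coord i (u k) := by
        rw [Filter.eventually_all]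
        intro i
        have htend : Filter.Tendsto (fun k => B.coord i (u k)) Filter.atTop
            (nhds (B.coord i v)) := ((hcont i).continuousAt.tendsto).comp hu
        have : B.coord i v = d i.1 := by
          rw [Module.Basis.coord_apply, hrepr i]
        rw [this] at htend
        exact htend.eventually_const_lt (hdpos i)
      obtain ⟨k, hk⟩ := hev.exists
      set e : Fin (m + 1) → ℝ := fun j => if h : j ∈ T then B.coord ⟨j, h⟩ (u k) else 0 with he
      have he0 : ∀ j, 0 ≤ e j := by
        intro j
        by_cases hj : j ∈ T
        · rw [he]
          simp only [hj, dif_pos]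
          exact (hk _).le
        · rw [he]
          simp only [hj, dif_neg, not_false_iff]
          exact le_refl 0
      have hesum : ∑ j, e j • wvec m n j = u k := by
        have h1 : ∑ j, e j • wvec m n j = ∑ j ∈ T, e j • wvec m n j :=
          (Finset.sum_subset (Finset.subset_univ T)
            (fun j _ hj => by rw [he]; simp [hj])).symm
        rw [h1, ← Finset.sum_attach T (fun j => e j • wvec m n j)]
        have h2 : ∀ i : {x // x ∈ T}, e i.1 • wvec m n i.1 = B.repr (u k) i • B i := by
          intro i
          rw [he, hB]
          simp only [i.2, dif_pos]
          rw [Module.Basis.coord_apply]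
        rw [Finset.sum_congr rfl (fun i _ => h2 i)]
        exact B.sum_repr (u k)
      have hesum1 : ∑ j, e j = 1 := by
        have := congrFun hesum 0
        rw [Finset.sum_apply] at this
        simp only [Pi.smul_apply, wvec_zero, smul_eq_mul, mul_one] at this
        rw [this, hu0 k]
      exact huC k ⟨e, ⟨he0, hesum1⟩, hesum⟩
    · -- dependent case: reduce support
      rw [Fintype.not_linearIndependent_iff] at hli
      have hex : ∃ g : {x // x ∈ T} → ℝ, (∑ i, g i • wvec m n i.1 = 0) ∧ ∃ i, 0 < g i := by
        obtain ⟨g, hgsum, i1, hgi1⟩ := hli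
        rcases lt_or_gt_of_ne hgi1 with hneg | hpos
        · refine ⟨-g, ?_, i1, by simpa using hneg⟩
          rw [← neg_eq_zero, ← Finset.sum_neg_distrib]
          rw [← hgsum]
          exact Finset.sum_congr rfl fun i _ => by simp
        · exact ⟨g, hgsum, i1, hpos⟩
      obtain ⟨g, hgsum, i1, hgi1⟩ := hex
      set S : Finset {x // x ∈ T} := Finset.univ.filter (fun i => 0 < g i) with hS
      have hSne : S.Nonempty := ⟨i1, Finset.mem_filter.2 ⟨Finset.mem_univ _, hgi1⟩⟩
      obtain ⟨i0, hi0S, hmin⟩ := S.exists_min_image (fun i => d i.1 / g i) hSne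
      have hgi0 : 0 < g i0 := (Finset.mem_filter.1 hi0S).2
      set t : ℝ := d i0.1 / g i0 with htdef
      have ht0 : 0 ≤ t := div_nonneg (hd _) hgi0.le
      set gg : Fin (m + 1) → ℝ := fun j => if h : j ∈ T then g ⟨j, h⟩ else 0 with hgg
      set d' : Fin (m + 1) → ℝ := fun j => d j - t * gg j with hd'def
      have hd'0 : ∀ j, 0 ≤ d' j := by
        intro j
        rw [hd'def]
        simp only
        by_cases hj : j ∈ T
        · rw [hgg]
          simp only [hj, dif_pos]
          rcases le_or_gt (g ⟨j, hj⟩) 0 with hg | hg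
          · nlinarith [hd j]
          · have hjS : (⟨j, hj⟩ : {x // x ∈ T}) ∈ S :=
              Finset.mem_filter.2 ⟨Finset.mem_univ _, hg⟩
            have := hmin _ hjS
            rw [le_div_iff₀ hg] at this
            linarith
        · rw [hgg]
          simp only [hj, dif_neg, not_false_iff]
          simpa using hd j
      have hggsum : ∑ j, gg j • wvec m n j = 0 := by
        have h1 : ∑ j, gg j • wvec m n j = ∑ j ∈ T, gg j • wvec m n j :=
          (Finset.sum_subset (Finset.subset_univ T)
            (fun j _ hj => by rw [hgg]; simp [hj])).symm
        rw [h1, ← Finset.sum_attach T (fun j => gg j • wvec m n j)]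
        rw [← hgsum]
        refine Finset.sum_congr rfl fun i _ => ?_
        rw [hgg]
        simp only [i.2, dif_pos]
      have hd'rep : v = ∑ j, d' j • wvec m n j := by
        have : ∑ j, d' j • wvec m n j
            = (∑ j, d j • wvec m n j) - t • ∑ j, gg j • wvec m n j := by
          rw [Finset.smul_sum, ← Finset.sum_sub_distrib]
          refine Finset.sum_congr rfl fun j _ => ?_
          rw [hd'def]
          simp only
          rw [sub_smul, smul_smul]
        rw [this, hggsum, smul_zero, sub_zero, hrep]
      have hsupp : Finset.univ.filter (fun j => d' j ≠ 0) ⊆ T.erase i0.1 := by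
        intro j hj
        rw [Finset.mem_filter] at hj
        rw [Finset.mem_erase]
        constructor
        · intro hji0
          apply hj.2
          rw [hd'def]
          simp only
          subst hji0
          rw [hgg]
          simp only [i0.2, dif_pos]
          rw [htdef]
          have heq : (⟨(i0 : Fin (m + 1)), i0.2⟩ : {x // x ∈ T}) = i0 := Subtype.ext rfl
          rw [heq, div_mul_cancel₀ _ hgi0.ne']
          ring
        · by_contra hjT
          apply hj.2
          rw [hd'def]
          simp only
          rw [hdT j hjT, hgg]
          simp [hjT]
      have hlt : (Finset.univ.filter (fun j => d' j ≠ 0)).card < N := by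
        have h1 := Finset.card_le_card hsupp
        have h2 : (T.erase i0.1).card < T.card :=
          Finset.card_erase_lt_of_mem i0.2
        omega
      exact ih _ hlt d' hd'0 hd'rep (le_refl _)

lemma Fmap_continuous (m n : ℕ) : Continuous (Fmap m n) := by
  apply continuous_finset_sum
  intro j _
  exact (continuous_apply j).smul continuous_const

lemma Cset_isClosed (m n : ℕ) : IsClosed (Cset m n) :=
  ((isCompact_stdSimplex _ _).image (Fmap_continuous m n)).isClosed

lemma muv_continuous (n : ℕ) : Continuous (muv n) :=
  continuous_pi fun s => (touchard (s : ℕ)).continuous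

lemma touchard_eval_zero (s : ℕ) : (touchard s).eval 0 = if s = 0 then 1 else 0 := by
  cases s with
  | zero => simp [touchard]
  | succ s => simp [touchard]

lemma Hpoly_eval_of_moments {n : ℕ} {R : ℝ} {α : Fin n → ℝ} {ms : Fin n → ℕ}
    (h : ∀ s ≤ n, ∑ i, α i * ((ms i : ℕ) : ℝ) ^ s = (touchard s).eval R) (x : ℝ) :
    (Hpoly n R).eval x = ∑ i, α i * (x - ((ms i : ℕ) : ℝ)) ^ n := by
  have hrhs : ∀ i : Fin n, α i * (x - ((ms i : ℕ) : ℝ)) ^ n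
      = ∑ k ∈ Finset.range (n + 1),
          α i * (x ^ k * (-1 : ℝ) ^ (n - k) * ((ms i : ℕ) : ℝ) ^ (n - k) * (n.choose k : ℝ)) := by
    intro i
    rw [sub_eq_add_neg, add_pow, Finset.mul_sum]
    refine Finset.sum_congr rfl fun k _ => ?_
    rw [neg_pow]
    ring
  calc (Hpoly n R).eval x
      = ∑ k ∈ Finset.range (n + 1),
          (-1 : ℝ) ^ (n - k) * (n.choose k : ℝ) * (touchard (n - k)).eval R * x ^ k := by
        rw [Hpoly, eval_finset_sum]
        refine Finset.sum_congr rfl fun k _ => ?_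
        simp
    _ = ∑ k ∈ Finset.range (n + 1), ∑ i : Fin n,
          α i * (x ^ k * (-1 : ℝ) ^ (n - k) * ((ms i : ℕ) : ℝ) ^ (n - k) * (n.choose k : ℝ)) := by
        refine Finset.sum_congr rfl fun k _ => ?_
        rw [← h (n - k) (Nat.sub_le n k), Finset.mul_sum, Finset.sum_mul]
        exact Finset.sum_congr rfl fun i _ => by ring
    _ = ∑ i : Fin n, α i * (x - ((ms i : ℕ) : ℝ)) ^ n := by
        rw [Finset.sum_comm]
        exact Finset.sum_congr rfl fun i _ => (hrhs i).symm

lemma fin_zero_coord {n : ℕ} (r : ℝ) : muv n r 0 = 1 := by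
  simp [muv, touchard]

theorem statement8 (m n : ℕ) (hn : 1 ≤ n) (hmn : n ≤ m) :
    ∃ ms : Fin n → ℕ, StrictMono ms ∧ (∀ i, ms i ≤ m) ∧
      ∃ α : Fin n → ℝ, (∀ i, 0 ≤ α i) ∧
        ∀ x : ℝ, (Hpoly n (Ropt m n)).eval x = ∑ i : Fin n, α i * (x - (ms i : ℝ)) ^ n := by
  classical
  set R := Ropt m n with hR
  have hR0 : 0 ≤ R := Ropt_nonneg m n
  rcases eq_or_lt_of_le hR0 with hReq | hRpos
  · -- degenerate case R = 0 : Hpoly is x^n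
    refine ⟨fun i => (i : ℕ), fun a b hab => hab,
      fun i => by show (i : ℕ) ≤ m; have := i.isLt; omega,
      fun i => if (i : ℕ) = 0 then 1 else 0,
      fun i => by show (0:ℝ) ≤ if (i : ℕ) = 0 then 1 else 0; split <;> norm_num, ?_⟩
    intro x
    apply Hpoly_eval_of_moments
    intro s hs
    rw [← hReq, touchard_eval_zero]
    rw [Finset.sum_eq_single (⟨0, by omega⟩ : Fin n)]
    · simp only [Fin.val_mk, Nat.cast_zero, eq_self_iff_true, if_true, one_mul]
      exact zero_pow_eq s
    · intro i _ hine
      have : (i : ℕ) ≠ 0 := fun h => hine (Fin.ext h)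
      rw [if_neg this, zero_mul]
    · intro h
      exact absurd (Finset.mem_univ _) h
  · -- main case R > 0
    have hmem : muv n R ∈ Cset m n := by
      have hseq : ∀ k : ℕ, ∃ r : ℝ, 0 < r ∧ r ≤ R ∧ R - 1/((k:ℝ)+1) < r ∧ muv n r ∈ Cset m n := by
        intro k
        have h1k : (0:ℝ) < 1/((k:ℝ)+1) := by positivity
        have hq0 : 0 ≤ max (R - 1/((k:ℝ)+1)) (R/2) := le_trans (by positivity) (le_max_right _ _)
        have hqR : max (R - 1/((k:ℝ)+1)) (R/2) < R := by
          apply max_lt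
          · linarith
          · linarith
        obtain ⟨r, hqr, hr0, φ, hφ, hAM⟩ := exists_feas_of_lt_Ropt hq0 hqR
        refine ⟨min r R, lt_min hr0 hRpos, min_le_right _ _, ?_,
          feas_mem (lt_min hr0 hRpos) hφ (AM_mono hAM (min_le_left _ _))⟩
        have hlb : R - 1/((k:ℝ)+1) ≤ max (R - 1/((k:ℝ)+1)) (R/2) := le_max_left _ _
        rcases le_total r R with h | h
        · rw [min_eq_left h]; linarith
        · rw [min_eq_right h]; linarith
      choose rr hrr0 hrrR hrrlb hrrmem using hseq
      have hlow : Filter.Tendsto (fun k : ℕ => R - 1/((k:ℝ)+1)) Filter.atTop (nhds R) := by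
        have := Filter.Tendsto.sub
          (tendsto_const_nhds : Filter.Tendsto (fun _ : ℕ => R) Filter.atTop (nhds R))
          tendsto_one_div_add_atTop_nhds_zero_nat
        simpa using this
      have htend : Filter.Tendsto rr Filter.atTop (nhds R) :=
        tendsto_of_tendsto_of_tendsto_of_le_of_le hlow tendsto_const_nhds
          (fun k => (hrrlb k).le) hrrR
      exact (Cset_isClosed m n).mem_of_tendsto (((muv_continuous n).tendsto R).comp htend)
        (Filter.Eventually.of_forall hrrmem)
    set u : ℕ → (Fin (n+1) → ℝ) := fun k => muv n (R + 1/((k:ℝ)+1)) with hu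
    have huC : ∀ k, u k ∉ Cset m n := by
      intro k hmemk
      have h1k : (0:ℝ) < 1/((k:ℝ)+1) := by positivity
      have hposk : 0 < R + 1/((k:ℝ)+1) := by linarith
      obtain ⟨φ, hφ, hAM⟩ := mem_feas hposk hmemk
      have hle := Ropt_ge_of_feas hn hposk ⟨φ, hφ, hAM⟩
      rw [← hR] at hle
      linarith
    have hutend : Filter.Tendsto u Filter.atTop (nhds (muv n R)) := by
      have harg : Filter.Tendsto (fun k : ℕ => R + 1/((k:ℝ)+1)) Filter.atTop (nhds R) := by
        have := Filter.Tendsto.add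
          (tendsto_const_nhds : Filter.Tendsto (fun _ : ℕ => R) Filter.atTop (nhds R))
          tendsto_one_div_add_atTop_nhds_zero_nat
        simpa using this
      exact ((muv_continuous n).tendsto R).comp harg
    have hu0 : ∀ k, u k 0 = 1 := fun k => fin_zero_coord _
    obtain ⟨T, hTcard, d, hd0, hdT, hrep⟩ := caratheodory_boundary hmem u hutend huC hu0
    obtain ⟨T', hTT', hT'sub, hT'card⟩ := Finset.exists_subsuperset_card_eq
      (Finset.subset_univ T) hTcard (by rw [Finset.card_fin]; omega)
    set e := T'.orderIsoOfFin hT'card with he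
    have hmom : ∀ s, s ≤ n →
        ∑ i : Fin n, d (e i : Fin (m+1)) * (((e i : Fin (m+1)) : ℕ) : ℝ) ^ s
          = (touchard s).eval R := by
      intro s hs
      have h1 : ∑ i : Fin n, d (e i : Fin (m+1)) * (((e i : Fin (m+1)) : ℕ) : ℝ) ^ s
          = ∑ j ∈ T', d j * ((j : ℕ) : ℝ) ^ s := by
        rw [← Finset.sum_coe_sort T' (fun j => d j * ((j : ℕ) : ℝ) ^ s)]
        exact Fintype.sum_equiv e.toEquiv _ _ (fun i => rfl)
      have h2 : ∑ j ∈ T', d j * ((j : ℕ) : ℝ) ^ s = ∑ j : Fin (m+1), d j * ((j : ℕ) : ℝ) ^ s :=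
        Finset.sum_subset (Finset.subset_univ T')
          (fun j _ hj => by rw [hdT j (fun hjT => hj (hTT' hjT)), zero_mul])
      have h3 : ∑ j : Fin (m+1), d j * ((j : ℕ) : ℝ) ^ s = muv n R ⟨s, by omega⟩ := by
        rw [hrep, Finset.sum_apply]
        rfl
      rw [h1, h2, h3]
      rfl
    refine ⟨fun i => ((e i : Fin (m+1)) : ℕ), ?_, ?_, fun i => d (e i : Fin (m+1)),
      fun i => hd0 _, ?_⟩
    · intro a b hab
      have h1 : e a < e b := (T'.orderIsoOfFin hT'card).strictMono hab
      have h2 : ((e a : Fin (m+1))) < ((e b : Fin (m+1))) := h1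
      exact h2
    · intro i
      show ((e i : Fin (m+1)) : ℕ) ≤ m
      have := ((e i : Fin (m+1))).isLt
      omega
    · intro x
      exact Hpoly_eval_of_moments hmom x
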